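/- For any CL-polynomial f of degree d whose h*-polynomial has nonnegative coefficients, every root -1/2 + α√-1 of f satisfies |α| ≤ α̃_d, where α̃_d is the maximum β such that -1/2 + β√-1 is a root of p_0^d(z) = d!(binom(z+d,d) + binom(z,d)). -/

import Mathlib

open Complex Finset

section CLAux

open Polynomial

lemma cl_descFactorial_cast (n N : ℕ) :
    ((n.descFactorial N : ℕ) : ℝ) = ∏ l ∈ Finset.range N, ((n : ℝ) - l) := by
  induction N with
  | zero => simp
  | succ N ih =>
    rw [Nat.descFactorial_succ, Finset.prod_range_succ, ← ih, Nat.cast_mul]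
    rcases lt_trichotomy n N with hl | he | hg
    · rw [Nat.descFactorial_eq_zero_iff_lt.2 hl, Nat.sub_eq_zero_of_le hl.le]
      simp
    · subst he; simp
    · rw [Nat.cast_sub hg.le]; ring

lemma cl_coeff_one_sub_X_pow (N v : ℕ) :
    ((1 - Polynomial.X : Polynomial ℝ) ^ N).coeff v = (-1 : ℝ) ^ v * (N.choose v : ℝ) := by
  induction N generalizing v with
  | zero =>
    cases v with
    | zero => simp
    | succ v => simp [Polynomial.coeff_one]
  | succ N ih =>
    have hexp : (1 - Polynomial.X : Polynomial ℝ) ^ (N + 1)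
        = (1 - Polynomial.X : Polynomial ℝ) ^ N - Polynomial.X * (1 - Polynomial.X) ^ N := by
      ring
    cases v with
    | zero =>
      simp [hexp, ih]
    | succ v =>
      rw [hexp, Polynomial.coeff_sub, Polynomial.coeff_X_mul, ih, ih,
        Nat.choose_succ_succ, Nat.cast_add]
      ring

lemma cl_fwdDiff_pow : ∀ (e n : ℕ), e < n →
    (fwdDiff (1 : ℕ))^[n] (fun k : ℕ => ((k : ℝ)) ^ e) = 0 := by
  intro e
  induction e using Nat.strong_induction_on with
  | _ e IH =>
    intro n hen
    obtain ⟨n, rfl⟩ : ∃ n', n = n' + 1 := ⟨n - 1, by omega⟩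
    rw [Function.iterate_succ_apply]
    have hΔ : fwdDiff (1:ℕ) (fun k : ℕ => ((k : ℝ)) ^ e)
        = ∑ i ∈ Finset.range e, (e.choose i : ℝ) • (fun k : ℕ => ((k : ℝ)) ^ i) := by
      funext k
      simp only [fwdDiff, Finset.sum_apply, Pi.smul_apply, smul_eq_mul]
      push_cast
      rw [add_pow]
      rw [Finset.sum_range_succ]
      simp [mul_comm]
    rw [hΔ, fwdDiff_iter_finset_sum]
    refine Finset.sum_eq_zero fun i hi => ?_
    have hi' : i < e := Finset.mem_range.1 hi
    rw [fwdDiff_iter_const_smul, IH i hi' n (by omega)]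
    simp

lemma cl_arctan_nonneg {x : ℝ} (hx : 0 ≤ x) : 0 ≤ Real.arctan x := by
  rw [← Real.arctan_zero]
  exact Real.arctan_strictMono.monotone hx

lemma cl_arctan_le_self {x : ℝ} (hx : 0 ≤ x) : Real.arctan x ≤ x := by
  rcases eq_or_lt_of_le hx with h | h
  · simp [← h]
  · have h1 : 0 < Real.arctan x := by
      rw [← Real.arctan_zero]
      exact Real.arctan_strictMono h
    have := Real.lt_tan h1 (Real.arctan_lt_pi_div_two x)
    rw [Real.tan_arctan] at this
    linarith

lemma cl_factor_polar (α t : ℝ) (hα : 0 < α) :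
    ((α : ℂ) - (t : ℂ) * Complex.I)
      = (Real.sqrt (α ^ 2 + t ^ 2) : ℂ) * Complex.exp ((-Real.arctan (t / α) : ℝ) * Complex.I) := by
  have hr : (0:ℝ) < Real.sqrt (α ^ 2 + t ^ 2) := Real.sqrt_pos.2 (by positivity)
  have hs : Real.sqrt (1 + (t / α) ^ 2) = Real.sqrt (α ^ 2 + t ^ 2) / α := by
    rw [show (1 : ℝ) + (t / α) ^ 2 = (α ^ 2 + t ^ 2) / α ^ 2 by field_simp,
      Real.sqrt_div (by positivity), Real.sqrt_sq hα.le]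
  have hcos : Real.cos (-Real.arctan (t / α)) = α / Real.sqrt (α ^ 2 + t ^ 2) := by
    rw [Real.cos_neg, Real.cos_arctan, hs]
    field_simp
  have hsin : Real.sin (-Real.arctan (t / α)) = -t / Real.sqrt (α ^ 2 + t ^ 2) := by
    rw [Real.sin_neg, Real.sin_arctan, hs]
    field_simp
  rw [Complex.exp_mul_I, ← Complex.ofReal_cos, ← Complex.ofReal_sin, hcos, hsin]
  apply Complex.ext <;> simp <;> [skip; ring_nf] <;> field_simp

lemma cl_prod_polar (α : ℝ) (hα : 0 < α) (d : ℕ) (t : ℕ → ℝ) :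
    ∏ l ∈ Finset.range d, ((α : ℂ) - (t l : ℂ) * Complex.I)
      = ((∏ l ∈ Finset.range d, Real.sqrt (α ^ 2 + t l ^ 2) : ℝ) : ℂ)
        * Complex.exp (((-∑ l ∈ Finset.range d, Real.arctan (t l / α) : ℝ)) * Complex.I) := by
  calc ∏ l ∈ Finset.range d, ((α : ℂ) - (t l : ℂ) * Complex.I)
      = ∏ l ∈ Finset.range d, ((Real.sqrt (α ^ 2 + t l ^ 2) : ℂ)
          * Complex.exp ((-Real.arctan (t l / α) : ℝ) * Complex.I)) :=
        Finset.prod_congr rfl fun l _ => cl_factor_polar α (t l) hα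
    _ = _ := by
        rw [Finset.prod_mul_distrib, ← Complex.exp_sum, ← Finset.sum_mul, Complex.ofReal_prod]
        congr 2
        simp only [Complex.ofReal_neg, Complex.ofReal_sum, Finset.sum_neg_distrib]

lemma cl_re_prod (α : ℝ) (hα : 0 < α) (d : ℕ) (t : ℕ → ℝ) :
    (∏ l ∈ Finset.range d, ((α : ℂ) - (t l : ℂ) * Complex.I)).re
      = (∏ l ∈ Finset.range d, Real.sqrt (α ^ 2 + t l ^ 2))
        * Real.cos (∑ l ∈ Finset.range d, Real.arctan (t l / α)) := by
  rw [cl_prod_polar α hα d t]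
  rw [Complex.mul_re, Complex.ofReal_re, Complex.ofReal_im, Complex.exp_ofReal_mul_I_re,
    Real.cos_neg]
  simp

lemma cl_re_prod_pos (α : ℝ) (hα : 0 < α) (d : ℕ) (t : ℕ → ℝ)
    (hsum : |∑ l ∈ Finset.range d, Real.arctan (t l / α)| < Real.pi / 2) :
    0 < (∏ l ∈ Finset.range d, ((α : ℂ) - (t l : ℂ) * Complex.I)).re := by
  rw [cl_re_prod α hα d t]
  apply mul_pos
  · exact Finset.prod_pos fun l _ => Real.sqrt_pos.2 (by positivity)
  · exact Real.cos_pos_of_mem_Ioo ⟨by linarith [abs_lt.1 hsum |>.1], (abs_lt.1 hsum).2⟩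

end CLAux

/-- `p₀ᵈ(z) = d!(binom(z+d,d) + binom(z,d)) = ∏_{j=1}^d (z+j) + ∏_{j=0}^{d-1}(z-j)`. -/
noncomputable def p0 (d : ℕ) (z : ℂ) : ℂ :=
  (∏ j ∈ Finset.range d, (z + (j + 1 : ℕ))) + ∏ j ∈ Finset.range d, (z - (j : ℕ))

/-- Theorem 3.5: For any CL-polynomial `f` of degree `d` whose h*-polynomial
has nonnegative coefficients, every root `-1/2 + α√-1` of `f` satisfies `|α| ≤ αtd_d`, the
maximum `β` with `p₀ᵈ(-1/2 + β√-1) = 0`. -/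
theorem stmt18 (a : ℝ) (ha : a ≠ 0) (m : ℕ) (c : ℕ → ℝ) (hc : ∀ i ≤ m, (1 : ℝ)/4 ≤ c i)
    (d : ℕ) (hd : (Even d ∧ d = 2 * m + 2) ∨ (¬ Even d ∧ d = 2 * m + 3))
    (f : ℂ → ℂ)
    (hf : ∀ z : ℂ, f z = (a : ℂ) * (if Even d then 1 else 2 * z + 1) *
      ∏ i ∈ Finset.range (m + 1), (z ^ 2 + z + (c i : ℂ)))
    (h : Polynomial ℝ)
    (hser : PowerSeries.mk (fun k : ℕ =>
        a * (if Even d then 1 else 2 * (k : ℝ) + 1) *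
          ∏ i ∈ Finset.range (m + 1), ((k : ℝ) ^ 2 + k + c i)) *
        (1 - PowerSeries.X) ^ (d + 1) = (h : PowerSeries ℝ))
    (hpos : ∀ j, 0 ≤ h.coeff j)
    (αtd : ℝ) (hαtd : IsGreatest {β : ℝ | p0 d (-(1/2) + β * Complex.I) = 0} αtd) :
    ∀ α : ℝ, f (-(1/2) + α * Complex.I) = 0 → |α| ≤ αtd := by
  have hd2 : 2 ≤ d := by rcases hd with ⟨_, rfl⟩ | ⟨_, rfl⟩ <;> omega
  set f' : ℕ → ℝ := fun k => a * (if Even d then 1 else 2*(k:ℝ)+1) *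
      ∏ i ∈ Finset.range (m+1), ((k:ℝ)^2+k+c i) with hf'def
  set F : Polynomial ℝ := Polynomial.C a *
      (if Even d then 1 else Polynomial.C 2 * Polynomial.X + 1) *
      ∏ i ∈ Finset.range (m+1), (Polynomial.X^2 + Polynomial.X + Polynomial.C (c i)) with hFdef
  have hFeval : ∀ x : ℝ, F.eval x
      = a * (if Even d then 1 else 2*x+1) * ∏ i ∈ Finset.range (m+1), (x^2+x+c i) := by
    intro x
    rcases em (Even d) with hE | hE <;> simp [hFdef, hE, Polynomial.eval_prod]
  have hFdeg : F.natDegree ≤ d := by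
    have hP : (∏ i ∈ Finset.range (m+1),
        (Polynomial.X^2 + Polynomial.X + Polynomial.C (c i)) : Polynomial ℝ).natDegree
        ≤ 2*(m+1) := by
      refine le_trans (Polynomial.natDegree_prod_le _ _) ?_
      have h2 : ∀ i ∈ Finset.range (m+1),
          (Polynomial.X^2 + Polynomial.X + Polynomial.C (c i)).natDegree ≤ 2 := by
        intro i _
        compute_degree
      have := Finset.sum_le_sum (f := fun i => (Polynomial.X^2 + Polynomial.X +
          Polynomial.C (c i) : Polynomial ℝ).natDegree) (g := fun _ => 2) h2
      simp only [Finset.sum_const, Finset.card_range, smul_eq_mul] at this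
      omega
    rcases hd with ⟨hE, hdd⟩ | ⟨hE, hdd⟩
    · rw [hFdef, if_pos hE]
      refine le_trans (Polynomial.natDegree_mul_le) ?_
      have h1 : (Polynomial.C a * 1 : Polynomial ℝ).natDegree = 0 := by simp
      omega
    · rw [hFdef, if_neg hE]
      refine le_trans (Polynomial.natDegree_mul_le) ?_
      have h1 : (Polynomial.C a * (Polynomial.C 2 * Polynomial.X + 1) : Polynomial ℝ).natDegree
          ≤ 1 := by
        refine le_trans (Polynomial.natDegree_mul_le) ?_
        have h3 : (Polynomial.C (2:ℝ) * Polynomial.X + 1 : Polynomial ℝ).natDegree ≤ 1 := by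
          compute_degree
        simp only [Polynomial.natDegree_C]
        omega
      omega
  -- Step A : high coefficients of h vanish
  have hcoeff0 : ∀ n, d + 1 ≤ n → h.coeff n = 0 := by
    have hiter : (fwdDiff (1:ℕ))^[d+1] f' = 0 := by
      have hfeq : f' = fun k : ℕ => F.eval (k:ℝ) := funext fun k => (hFeval (k:ℝ)).symm
      have hexp : (fun k : ℕ => F.eval (k:ℝ))
          = ∑ e ∈ Finset.range (d+1), F.coeff e • fun k : ℕ => ((k:ℝ))^e := by
        funext k
        rw [Finset.sum_apply]
        simp only [Pi.smul_apply, smul_eq_mul]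
        exact Polynomial.eval_eq_sum_range' (lt_of_le_of_lt hFdeg (lt_add_one d)) _
      rw [hfeq, hexp, fwdDiff_iter_finset_sum]
      refine Finset.sum_eq_zero fun e he => ?_
      rw [fwdDiff_iter_const_smul, cl_fwdDiff_pow e (d+1) (Finset.mem_range.1 he)]
      simp
    intro n hn
    have hcoe : h.coeff n = (PowerSeries.coeff n) (h : PowerSeries ℝ) :=
      (Polynomial.coeff_coe _ _).symm
    rw [hcoe, ← hser, PowerSeries.coeff_mul, Finset.Nat.sum_antidiagonal_eq_sum_range_succ_mk]
    have hco : ∀ v : ℕ, (PowerSeries.coeff v) ((1 - PowerSeries.X)^(d+1))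
        = (-1:ℝ)^v * (((d+1).choose v : ℕ) : ℝ) := by
      intro v
      have hcoe2 : ((1 - Polynomial.X : Polynomial ℝ) : PowerSeries ℝ)
          = 1 - PowerSeries.X := by
        push_cast
        rfl
      rw [← hcoe2, ← Polynomial.coe_pow, Polynomial.coeff_coe, cl_coeff_one_sub_X_pow]
    simp only [PowerSeries.coeff_mk, hco]
    set y := n - (d+1) with hy
    have h0 := congrFun hiter y
    rw [fwdDiff_iter_eq_sum_shift] at h0
    simp only [Pi.zero_apply] at h0
    calc ∑ k ∈ Finset.range (n+1), f' k * ((-1:ℝ)^(n-k) * (((d+1).choose (n-k) : ℕ) : ℝ))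
        = ∑ k ∈ Finset.Ico y (n+1), f' k * ((-1:ℝ)^(n-k) * (((d+1).choose (n-k) : ℕ) : ℝ)) := by
          symm
          apply Finset.sum_subset
          · rw [Finset.range_eq_Ico]
            exact Finset.Ico_subset_Ico (by omega) le_rfl
          · intro x hx hnx
            simp only [Finset.mem_range] at hx
            simp only [Finset.mem_Ico] at hnx
            have : d + 1 < n - x := by omega
            rw [Nat.choose_eq_zero_of_lt this]
            simp
      _ = ∑ k ∈ Finset.range (d+2), f' (y+k) *
            ((-1:ℝ)^(n-(y+k)) * (((d+1).choose (n-(y+k)) : ℕ) : ℝ)) := by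
          rw [Finset.sum_Ico_eq_sum_range, show n + 1 - y = d + 2 by omega]
      _ = ∑ k ∈ Finset.range (d+2), ((-1:ℤ)^(d+1-k) * ((d+1).choose k : ℤ)) • f' (y + k • 1) := by
          refine Finset.sum_congr rfl fun k hk => ?_
          have hk' : k ≤ d+1 := by
            have := Finset.mem_range.1 hk; omega
          rw [show n - (y+k) = d+1-k by omega,
            show (d+1).choose (d+1-k) = (d+1).choose k from Nat.choose_symm hk']
          simp only [smul_eq_mul, nsmul_eq_mul, mul_one, zsmul_eq_mul]
          push_cast
          ring
      _ = 0 := h0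
  -- Step B : expansion of f' in binomial basis
  have hL2 : ∀ k : ℕ, f' k
      = ∑ j ∈ Finset.range (d+1), h.coeff j * (((k + d - j).choose d : ℕ) : ℝ) := by
    intro k
    have hinv : ((1 - PowerSeries.X : PowerSeries ℝ)^(d+1)) *
        (PowerSeries.mk fun n => (((d+n).choose d : ℕ) : ℝ)) = 1 := by
      rw [mul_comm]
      exact_mod_cast PowerSeries.mk_add_choose_mul_one_sub_pow_eq_one (S := ℝ) (d := d)
    have hmk : PowerSeries.mk f' = (h : PowerSeries ℝ) *
        PowerSeries.mk fun n => (((d+n).choose d : ℕ) : ℝ) := by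
      calc PowerSeries.mk f'
          = PowerSeries.mk f' * (((1 - PowerSeries.X)^(d+1)) *
              PowerSeries.mk fun n => (((d+n).choose d : ℕ) : ℝ)) := by rw [hinv, mul_one]
        _ = (PowerSeries.mk f' * (1 - PowerSeries.X)^(d+1)) *
              PowerSeries.mk fun n => (((d+n).choose d : ℕ) : ℝ) := by ring
        _ = _ := by rw [hser]
    have hck := congrArg (PowerSeries.coeff k) hmk
    rw [PowerSeries.coeff_mk, PowerSeries.coeff_mul,
      Finset.Nat.sum_antidiagonal_eq_sum_range_succ_mk] at hck
    simp only [Polynomial.coeff_coe, PowerSeries.coeff_mk] at hck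
    rw [hck]
    set G : ℕ → ℝ := fun j => h.coeff j *
      (if j ≤ k then (((k + d - j).choose d : ℕ) : ℝ) else 0) with hG
    have e1 : ∑ j ∈ Finset.range (k+1), h.coeff j * (((d + (k-j)).choose d : ℕ) : ℝ)
        = ∑ j ∈ Finset.range (k+1), G j := by
      refine Finset.sum_congr rfl fun j hj => ?_
      have hjk : j ≤ k := by have := Finset.mem_range.1 hj; omega
      rw [hG]
      simp only [if_pos hjk]
      rw [show d + (k-j) = k + d - j by omega]
    have e2 : ∑ j ∈ Finset.range (d+1), h.coeff j * (((k + d - j).choose d : ℕ) : ℝ)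
        = ∑ j ∈ Finset.range (d+1), G j := by
      refine Finset.sum_congr rfl fun j hj => ?_
      have hjd : j ≤ d := by have := Finset.mem_range.1 hj; omega
      rcases le_or_gt j k with hjk | hjk
      · rw [hG]; simp only [if_pos hjk]
      · rw [hG]
        simp only [if_neg (by omega : ¬ j ≤ k)]
        rw [Nat.choose_eq_zero_of_lt (by omega : k + d - j < d)]
        simp
    have e3 : ∑ j ∈ Finset.range (k+1), G j = ∑ j ∈ Finset.range (k+d+2), G j := by
      apply Finset.sum_subset
      · exact Finset.range_subset_range.2 (by omega)
      · intro x hx hnx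
        simp only [Finset.mem_range] at hx hnx
        rw [hG]
        simp only [if_neg (by omega : ¬ x ≤ k)]
        simp
    have e4 : ∑ j ∈ Finset.range (d+1), G j = ∑ j ∈ Finset.range (k+d+2), G j := by
      apply Finset.sum_subset
      · exact Finset.range_subset_range.2 (by omega)
      · intro x hx hnx
        simp only [Finset.mem_range] at hx hnx
        rw [hG]
        simp only [hcoeff0 x (by omega)]
        simp
    rw [e1, e2, e3, e4]
  -- Step C : polynomial identity
  have hpoly : Polynomial.C ((d.factorial : ℕ) : ℝ) * F
      = ∑ j ∈ Finset.range (d+1), Polynomial.C (h.coeff j) *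
          ∏ l ∈ Finset.range d, (Polynomial.X + Polynomial.C ((d:ℝ) - j - l)) := by
    apply Polynomial.eq_of_infinite_eval_eq
    have hinf : (Set.range (fun k : ℕ => (k:ℝ))).Infinite :=
      Set.infinite_range_of_injective Nat.cast_injective
    refine hinf.mono ?_
    rintro x ⟨k, rfl⟩
    show Polynomial.eval _ _ = Polynomial.eval _ _
    rw [Polynomial.eval_mul, Polynomial.eval_C, hFeval]
    rw [Polynomial.eval_finset_sum]
    have hrhs : ∀ j ∈ Finset.range (d+1),
        Polynomial.eval ((k:ℝ)) (Polynomial.C (h.coeff j) *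
          ∏ l ∈ Finset.range d, (Polynomial.X + Polynomial.C ((d:ℝ) - j - l)))
        = h.coeff j * (((k + d - j).descFactorial d : ℕ) : ℝ) := by
      intro j hj
      have hjd : j ≤ d := by have := Finset.mem_range.1 hj; omega
      rw [Polynomial.eval_mul, Polynomial.eval_C, Polynomial.eval_prod]
      congr 1
      rw [cl_descFactorial_cast]
      refine Finset.prod_congr rfl fun l _ => ?_
      rw [Polynomial.eval_add, Polynomial.eval_X, Polynomial.eval_C,
        Nat.cast_sub (by omega : j ≤ k + d), Nat.cast_add]
      ring
    rw [Finset.sum_congr rfl hrhs]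
    have hlhs : (fun x : ℝ => a * (if Even d then 1 else 2*x+1) *
        ∏ i ∈ Finset.range (m+1), (x^2+x+c i)) (k:ℝ) = f' k := rfl
    calc ((d.factorial : ℕ) : ℝ) * (a * (if Even d then 1 else 2*(k:ℝ)+1) *
          ∏ i ∈ Finset.range (m+1), ((k:ℝ)^2+(k:ℝ)+c i))
        = ((d.factorial : ℕ) : ℝ) * f' k := by rw [hf'def]
      _ = ∑ j ∈ Finset.range (d+1), h.coeff j *
            (((d.factorial : ℕ) : ℝ) * (((k + d - j).choose d : ℕ) : ℝ)) := by
          rw [hL2 k, Finset.mul_sum]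
          exact Finset.sum_congr rfl fun j _ => by ring
      _ = ∑ j ∈ Finset.range (d+1), h.coeff j * (((k + d - j).descFactorial d : ℕ) : ℝ) := by
          refine Finset.sum_congr rfl fun j _ => ?_
          rw [Nat.descFactorial_eq_factorial_mul_choose]
          push_cast
          ring
  -- Step D : some coefficient is positive
  have hj0 : ∃ j ∈ Finset.range (d+1), 0 < h.coeff j := by
    by_contra hno
    push_neg at hno
    have hallz : ∀ j ∈ Finset.range (d+1), h.coeff j = 0 :=
      fun j hj => le_antisymm (hno j hj) (hpos j)
    have h0 : f' 0 = 0 := by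
      rw [hL2 0]
      exact Finset.sum_eq_zero fun j hj => by rw [hallz j hj, zero_mul]
    apply absurd h0
    rw [hf'def]
    simp only
    have hprod : 0 < ∏ i ∈ Finset.range (m+1), (((0:ℕ):ℝ)^2+((0:ℕ):ℝ)+c i) := by
      refine Finset.prod_pos fun i hi => ?_
      have : i ≤ m := by have := Finset.mem_range.1 hi; omega
      have := hc i this
      push_cast
      linarith
    have hb : (if Even d then (1:ℝ) else 2*((0:ℕ):ℝ)+1) ≠ 0 := by
      rcases em (Even d) with hE | hE <;> simp [hE]
    exact mul_ne_zero (mul_ne_zero ha hb) hprod.ne'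
  -- Step E : analytic part
  set u : ℝ → ℕ → ℝ := fun γ n => ∑ l ∈ Finset.range n, Real.arctan (((l:ℝ)+1/2)/γ) with hudef
  have hαs : ∃ αs : ℝ, 1/2 ≤ αs ∧ u αs d = Real.pi/2 := by
    have hcont : ContinuousOn (fun γ : ℝ => u γ d) (Set.Icc (1/2 : ℝ) ((d:ℝ)^2)) := by
      refine continuousOn_finset_sum _ fun l _ => ?_
      refine Real.continuous_arctan.comp_continuousOn ?_
      refine ContinuousOn.div continuousOn_const continuousOn_id ?_
      intro x hx
      exact ne_of_gt (lt_of_lt_of_le (by norm_num) hx.1)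
    have hdpos : (0:ℝ) < (d:ℝ) := by exact_mod_cast (by omega : 0 < d)
    have hgauss : ∑ l ∈ Finset.range d, ((l:ℝ)+1/2) = (d:ℝ)^2/2 := by
      rw [Finset.sum_add_distrib, Finset.sum_const, Finset.card_range, nsmul_eq_mul]
      have h2 := Finset.sum_range_id_mul_two d
      have h3 : (∑ l ∈ Finset.range d, (l:ℝ)) * 2 = (d:ℝ) * ((d:ℝ) - 1) := by
        have := congrArg (Nat.cast : ℕ → ℝ) h2
        push_cast [Nat.cast_sub (show 1 ≤ d by omega)] at this
        linarith
      nlinarith [h3]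
    have hlow : u ((d:ℝ)^2) d ≤ 1/2 := by
      have hd2pos : (0:ℝ) < (d:ℝ)^2 := by positivity
      calc u ((d:ℝ)^2) d ≤ ∑ l ∈ Finset.range d, ((l:ℝ)+1/2)/(d:ℝ)^2 :=
            Finset.sum_le_sum fun l _ => cl_arctan_le_self (by positivity)
        _ = ((d:ℝ)^2/2)/(d:ℝ)^2 := by rw [← Finset.sum_div, hgauss]
        _ = 1/2 := by field_simp
    have hhigh : Real.pi/2 < u (1/2 : ℝ) d := by
      have hsub : ({0, 1} : Finset ℕ) ⊆ Finset.range d := by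
        intro x hx
        simp only [Finset.mem_insert, Finset.mem_singleton] at hx
        rcases hx with rfl | rfl <;> exact Finset.mem_range.2 (by omega)
      have hmono := Finset.sum_le_sum_of_subset_of_nonneg hsub
        (fun l _ _ => cl_arctan_nonneg (by positivity : (0:ℝ) ≤ ((l:ℝ)+1/2)/(1/2)))
      have hpair : ∑ l ∈ ({0,1} : Finset ℕ), Real.arctan (((l:ℝ)+1/2)/(1/2))
          = Real.arctan 1 + Real.arctan 3 := by
        rw [Finset.sum_pair (by norm_num : (0:ℕ) ≠ 1)]
        norm_num
      have h13 : Real.pi/4 < Real.arctan 3 := by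
        rw [← Real.arctan_one]
        exact Real.arctan_strictMono (by norm_num)
      have h11 := Real.arctan_one
      have : Real.pi/2 < ∑ l ∈ ({0,1} : Finset ℕ), Real.arctan (((l:ℝ)+1/2)/(1/2)) := by
        rw [hpair]; linarith
      exact lt_of_lt_of_le this hmono
    have hle : (1/2:ℝ) ≤ (d:ℝ)^2 := by nlinarith [show (2:ℝ) ≤ (d:ℝ) from by exact_mod_cast hd2]
    have hIVT := intermediate_value_Icc' hle hcont
    have hmem : Real.pi/2 ∈ Set.Icc (u ((d:ℝ)^2) d) (u (1/2:ℝ) d) :=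
      ⟨le_trans hlow (by linarith [Real.pi_gt_three]), hhigh.le⟩
    obtain ⟨αs, hαsmem, hαseq⟩ := hIVT hmem
    exact ⟨αs, hαsmem.1, hαseq⟩
  obtain ⟨αs, hαs12, hαsval⟩ := hαs
  have hαspos : 0 < αs := lt_of_lt_of_le (by norm_num) hαs12
  have hroot : p0 d (-(1/2) + αs * Complex.I) = 0 := by
    set z : ℂ := -(1/2) + (αs:ℝ) * Complex.I with hz
    have h1 : ∏ j ∈ Finset.range d, (z + ((j:ℕ) + 1 : ℕ))
        = Complex.I^d * ∏ l ∈ Finset.range d,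
            ((αs:ℂ) - ((((l:ℝ)+1/2 : ℝ)):ℂ) * Complex.I) := by
      calc ∏ j ∈ Finset.range d, (z + ((j:ℕ) + 1 : ℕ))
          = ∏ l ∈ Finset.range d, (Complex.I *
              ((αs:ℂ) - ((((l:ℝ)+1/2 : ℝ)):ℂ) * Complex.I)) := by
            refine Finset.prod_congr rfl fun l _ => ?_
            rw [hz]
            push_cast
            linear_combination (((l:ℂ))+1/2) * Complex.I_sq
        _ = _ := by rw [Finset.prod_mul_distrib, Finset.prod_const, Finset.card_range]
    have h2 : ∏ j ∈ Finset.range d, (z - ((j:ℕ) : ℕ))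
        = Complex.I^d * ∏ l ∈ Finset.range d,
            ((αs:ℂ) - ((-((l:ℝ)+1/2) : ℝ):ℂ) * Complex.I) := by
      calc ∏ j ∈ Finset.range d, (z - ((j:ℕ) : ℕ))
          = ∏ l ∈ Finset.range d, (Complex.I *
              ((αs:ℂ) - ((-((l:ℝ)+1/2) : ℝ):ℂ) * Complex.I)) := by
            refine Finset.prod_congr rfl fun l _ => ?_
            rw [hz]
            push_cast
            linear_combination (-((l:ℂ))-1/2) * Complex.I_sq
        _ = _ := by rw [Finset.prod_mul_distrib, Finset.prod_const, Finset.card_range]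
    have hconj : ∏ l ∈ Finset.range d, ((αs:ℂ) - ((-((l:ℝ)+1/2) : ℝ):ℂ) * Complex.I)
        = (starRingEnd ℂ) (∏ l ∈ Finset.range d,
            ((αs:ℂ) - ((((l:ℝ)+1/2 : ℝ)):ℂ) * Complex.I)) := by
      rw [map_prod]
      refine Finset.prod_congr rfl fun l _ => ?_
      simp only [map_sub, map_mul, Complex.conj_ofReal, Complex.conj_I]
      push_cast
      ring
    have hre0 : (∏ l ∈ Finset.range d,
        ((αs:ℂ) - ((((l:ℝ)+1/2 : ℝ)):ℂ) * Complex.I)).re = 0 := by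
      rw [cl_re_prod αs hαspos d (fun l => (l:ℝ)+1/2)]
      have : ∑ l ∈ Finset.range d, Real.arctan (((l:ℝ)+1/2)/αs) = Real.pi/2 := hαsval
      rw [this, Real.cos_pi_div_two, mul_zero]
    show (∏ j ∈ Finset.range d, (z + ((j:ℕ) + 1 : ℕ)))
        + ∏ j ∈ Finset.range d, (z - ((j:ℕ) : ℕ)) = 0
    rw [h1, h2, hconj, ← mul_add, Complex.add_conj, hre0]
    simp
  have hαtd_ge : αs ≤ αtd := hαtd.2 hroot
  -- Main contradiction
  intro α hfα
  by_contra hcon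
  push_neg at hcon
  set β := |α| with hβdef
  have hβpos : 0 < β := lt_trans (lt_of_lt_of_le hαspos hαtd_ge) hcon
  have hβαs : αs < β := lt_of_le_of_lt hαtd_ge hcon
  have hkey : ∀ (γ r : ℝ), ((-(1/2) + (γ:ℂ) * Complex.I)^2 + (-(1/2) + (γ:ℂ) * Complex.I)
      + (r : ℂ)) = ((r - 1/4 - γ^2 : ℝ) : ℂ) := by
    intro γ r
    push_cast
    linear_combination (γ:ℂ)^2 * Complex.I_sq
  have hfβ : f (-(1/2) + (β:ℝ) * Complex.I) = 0 := by
    have h0 := hfα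
    rw [hf] at h0
    rcases mul_eq_zero.1 h0 with h1 | h2
    · rcases mul_eq_zero.1 h1 with ha' | hb
      · exact absurd (by exact_mod_cast ha' : a = 0) ha
      · exfalso
        rcases em (Even d) with hE | hE
        · rw [if_pos hE] at hb
          exact one_ne_zero hb
        · rw [if_neg hE] at hb
          have him := congrArg Complex.im hb
          simp at him
          rw [hβdef, him] at hβpos
          simp at hβpos
    · obtain ⟨i, hi, hzero⟩ := Finset.prod_eq_zero_iff.1 h2
      rw [hkey α (c i)] at hzero
      have hreal : c i - 1/4 - α^2 = 0 := by exact_mod_cast hzero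
      rw [hf]
      apply mul_eq_zero_of_right
      apply Finset.prod_eq_zero hi
      rw [hkey β (c i), show c i - 1/4 - β^2 = 0 by rw [hβdef, _root_.sq_abs]; exact hreal]
      exact Complex.ofReal_zero
  have hubound : u β d < Real.pi / 2 := by
    have : u β d < u αs d := by
      refine Finset.sum_lt_sum_of_nonempty ⟨0, Finset.mem_range.2 (by omega)⟩ fun l _ => ?_
      exact Real.arctan_strictMono (div_lt_div_of_pos_left (by positivity) hαspos hβαs)
    rw [hαsval] at this
    exact this
  have hgj : ∀ j ≤ d, |∑ l ∈ Finset.range d, Real.arctan (((l:ℝ)+1/2-j)/β)| < Real.pi/2 := by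
    intro j hj
    have hsplitIco : ∑ l ∈ Finset.Ico j d, Real.arctan (((l:ℝ)+1/2-j)/β) = u β (d-j) := by
      rw [Finset.sum_Ico_eq_sum_range]
      refine Finset.sum_congr rfl fun l _ => ?_
      push_cast
      congr 1
      ring
    have hsplitlow : ∑ l ∈ Finset.range j, Real.arctan (((l:ℝ)+1/2-j)/β) = - u β j := by
      rw [← Finset.sum_range_reflect]
      rw [hudef]
      simp only
      rw [← Finset.sum_neg_distrib]
      refine Finset.sum_congr rfl fun l hl => ?_
      have hl' : l < j := Finset.mem_range.1 hl
      have hcast : ((j - 1 - l : ℕ):ℝ) = (j:ℝ) - 1 - l := by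
        rw [show j - 1 - l = j - (1 + l) by omega, Nat.cast_sub (by omega)]
        push_cast
        ring
      rw [hcast, ← Real.arctan_neg]
      congr 1
      ring
    have hdecomp : ∑ l ∈ Finset.range d, Real.arctan (((l:ℝ)+1/2-j)/β)
        = u β (d-j) - u β j := by
      rw [← Finset.sum_range_add_sum_Ico _ hj, hsplitlow, hsplitIco]
      ring
    have hnonneg : ∀ n, 0 ≤ u β n :=
      fun n => Finset.sum_nonneg fun l _ => cl_arctan_nonneg (by positivity)
    have hmono : ∀ n, n ≤ d → u β n ≤ u β d := fun n hn =>
      Finset.sum_le_sum_of_subset_of_nonneg (Finset.range_subset_range.2 hn)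
        (fun l _ _ => cl_arctan_nonneg (by positivity))
    rw [hdecomp, abs_lt]
    constructor
    · have := hmono j hj
      have := hnonneg (d-j)
      linarith
    · have := hmono (d-j) (by omega)
      have := hnonneg j
      linarith
  have hVpos : ∀ j ≤ d, 0 < (∏ l ∈ Finset.range d,
      ((β : ℂ) - ((((l:ℝ)+1/2-(j:ℝ)) : ℝ) : ℂ) * Complex.I)).re := by
    intro j hj
    exact cl_re_prod_pos β hβpos d (fun l => (l:ℝ)+1/2-(j:ℝ)) (hgj j hj)
  -- final contradiction
  obtain ⟨j0, hj0mem, hj0pos⟩ := hj0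
  set z : ℂ := -(1/2) + (β:ℝ) * Complex.I with hz
  have hFz : (Polynomial.aeval z) F = f z := by
    rw [hf]
    rcases em (Even d) with hE | hE <;>
      simp [hFdef, hE, map_prod, Polynomial.aeval_C, Complex.coe_algebraMap]
  have hGz := congrArg (Polynomial.aeval z) hpoly
  rw [map_mul, Polynomial.aeval_C, hFz, hfβ, mul_zero, map_sum] at hGz
  have hsummand : ∀ j ∈ Finset.range (d+1), (Polynomial.aeval z)
      (Polynomial.C (h.coeff j) *
        ∏ l ∈ Finset.range d, (Polynomial.X + Polynomial.C ((d:ℝ) - j - l)))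
      = (h.coeff j : ℂ) * (Complex.I^d * ∏ l ∈ Finset.range d,
          ((β : ℂ) - ((((l:ℝ)+1/2-(j:ℝ)) : ℝ) : ℂ) * Complex.I)) := by
    intro j hj
    rw [map_mul, Polynomial.aeval_C, map_prod]
    congr 1
    calc ∏ l ∈ Finset.range d, (Polynomial.aeval z)
          (Polynomial.X + Polynomial.C ((d:ℝ) - j - l))
        = ∏ l ∈ Finset.range d, (z + ((((d:ℝ) - j - l : ℝ)) : ℂ)) := by
          refine Finset.prod_congr rfl fun l _ => ?_
          rw [map_add, Polynomial.aeval_X, Polynomial.aeval_C]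
          rfl
      _ = ∏ l ∈ Finset.range d, (z + ((((d:ℝ) - j - (d-1-l : ℕ) : ℝ)) : ℂ)) :=
          (Finset.prod_range_reflect (fun l => (z + ((((d:ℝ) - j - (l:ℕ) : ℝ)) : ℂ))) d).symm
      _ = ∏ l ∈ Finset.range d, (Complex.I *
            ((β : ℂ) - ((((l:ℝ)+1/2-(j:ℝ)) : ℝ) : ℂ) * Complex.I)) := by
          refine Finset.prod_congr rfl fun l hl => ?_
          have hl' : l < d := Finset.mem_range.1 hl
          have hcast : ((d - 1 - l : ℕ):ℝ) = (d:ℝ) - 1 - l := by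
            rw [show d - 1 - l = d - (1 + l) by omega, Nat.cast_sub (by omega)]
            push_cast
            ring
          rw [hz, hcast]
          push_cast
          linear_combination (((l:ℂ))+1/2-(j:ℂ)) * Complex.I_sq
      _ = _ := by rw [Finset.prod_mul_distrib, Finset.prod_const, Finset.card_range]
  rw [Finset.sum_congr rfl hsummand] at hGz
  have hGz2 : ∑ j ∈ Finset.range (d+1), (h.coeff j : ℂ) * ∏ l ∈ Finset.range d,
      ((β : ℂ) - ((((l:ℝ)+1/2-(j:ℝ)) : ℝ) : ℂ) * Complex.I) = 0 := by
    have hfactor : ∑ j ∈ Finset.range (d+1), (h.coeff j : ℂ) * (Complex.I^d *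
        ∏ l ∈ Finset.range d, ((β : ℂ) - ((((l:ℝ)+1/2-(j:ℝ)) : ℝ) : ℂ) * Complex.I))
        = Complex.I^d * ∑ j ∈ Finset.range (d+1), (h.coeff j : ℂ) *
          ∏ l ∈ Finset.range d, ((β : ℂ) - ((((l:ℝ)+1/2-(j:ℝ)) : ℝ) : ℂ) * Complex.I) := by
      rw [Finset.mul_sum]
      exact Finset.sum_congr rfl fun j _ => by ring
    rw [hfactor] at hGz
    rcases mul_eq_zero.1 hGz.symm with hI | hok
    · exact absurd hI (pow_ne_zero _ Complex.I_ne_zero)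
    · exact hok
  have hre := congrArg Complex.re hGz2
  rw [Complex.re_sum] at hre
  simp only [Complex.zero_re] at hre
  have hre2 : ∑ j ∈ Finset.range (d+1), h.coeff j * (∏ l ∈ Finset.range d,
      ((β : ℂ) - ((((l:ℝ)+1/2-(j:ℝ)) : ℝ) : ℂ) * Complex.I)).re = 0 := by
    rw [← hre]
    refine Finset.sum_congr rfl fun j _ => ?_
    rw [Complex.mul_re, Complex.ofReal_re, Complex.ofReal_im]
    ring
  have hsumpos : 0 < ∑ j ∈ Finset.range (d+1), h.coeff j * (∏ l ∈ Finset.range d,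
      ((β : ℂ) - ((((l:ℝ)+1/2-(j:ℝ)) : ℝ) : ℂ) * Complex.I)).re := by
    refine Finset.sum_pos' (fun j hj => mul_nonneg (hpos j)
      (hVpos j (by have := Finset.mem_range.1 hj; omega)).le) ?_
    exact ⟨j0, hj0mem, mul_pos hj0pos (hVpos j0 (by have := Finset.mem_range.1 hj0mem; omega))⟩
  linarith
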